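/- Let γ be a primitive element of F_q and let A_1, ..., A_s ∈ F_q[X], not all zero. Then the F_q-vector space of polynomials f ∈ F_q[X] of degree less than q-1 satisfying A_1(X) f(X) + A_2(X) f(γX) + ... + A_s(X) f(γ^{s-1} X) = 0 has dimension at most s-1. -/

import Mathlib

open Polynomial

private lemma aeval_C_mul_X_coeff {Fq : Type*} [Field Fq] (c : Fq) (f : Fq[X]) (j : ℕ) :
    (aeval (C c * X) f).coeff j = c ^ j * f.coeff j := by
  induction f using Polynomial.induction_on' with
  | add p q hp hq => simp [hp, hq, mul_add]
  | monomial n a =>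
    rw [aeval_monomial, mul_pow, ← C_pow, algebraMap_eq, ← mul_assoc, ← C_mul,
      coeff_C_mul_X_pow, coeff_monomial]
    rcases eq_or_ne j n with rfl | h
    · simp [mul_comm]
    · simp [h, Ne.symm h]

private lemma key_step {Fq : Type*} [Field Fq] (s : ℕ) (A : Fin s → Fq[X]) (c : Fin s → Fq)
    (f : Fq[X]) (e j : ℕ)
    (hlow : ∀ k < e, ∀ i, (A i).coeff k = 0)
    (hf : ∀ j' < j, f.coeff j' = 0)
    (hT : (∑ i : Fin s, A i * (aeval (C (c i) * X) f)).coeff (j + e) = 0) :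
    (∑ i : Fin s, (A i).coeff e * (c i) ^ j) * f.coeff j = 0 := by
  rw [finset_sum_coeff] at hT
  simp only [coeff_mul, aeval_C_mul_X_coeff] at hT
  rw [Finset.sum_comm, Finset.sum_eq_single ((e, j) : ℕ × ℕ)] at hT
  · simpa [Finset.sum_mul, mul_assoc] using hT
  · rintro ⟨k, l⟩ hp hne
    rw [Finset.HasAntidiagonal.mem_antidiagonal] at hp
    rcases lt_trichotomy k e with hk | rfl | hk
    · exact Finset.sum_eq_zero fun i _ => by rw [hlow k hk i, zero_mul]
    · exact absurd (by omega : l = j) (by simpa using hne)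
    · have hl : l < j := by omega
      exact Finset.sum_eq_zero fun i _ => by rw [hf l hl, mul_zero, mul_zero]
  · intro h
    exact absurd (Finset.HasAntidiagonal.mem_antidiagonal.mpr (by omega)) h

/-- Let `γ` be a primitive element of `F_q` and `A_1, …, A_s ∈ F_q[X]`,
not all zero.  The `F_q`-vector space of polynomials `f` of degree `< q - 1` with
`A_1(X) f(X) + A_2(X) f(γX) + … + A_s(X) f(γ^(s-1) X) = 0` has dimension at most `s - 1`. -/
theorem folded_equation_solution_space_dim_le
    (Fq : Type*) [Field Fq] [Fintype Fq]
    (γ : Fqˣ) (hγ : ∀ u : Fqˣ, u ∈ Subgroup.zpowers γ)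
    (s : ℕ) (A : Fin s → Polynomial Fq) (hA : ∃ i, A i ≠ 0) :
    Module.finrank Fq
      ↥(Polynomial.degreeLT Fq (Fintype.card Fq - 1) ⊓
        LinearMap.ker (∑ i : Fin s,
          (LinearMap.mulLeft Fq (A i)).comp
            (Polynomial.aeval (Polynomial.C ((γ : Fq) ^ (i : ℕ)) * Polynomial.X)).toLinearMap))
      ≤ s - 1 := by
  classical
  obtain ⟨i0, hi0⟩ := hA
  set n : ℕ := Fintype.card Fq - 1 with hn
  -- minimal index with a nonzero coefficient
  have hex : ∃ k, ∃ i, (A i).coeff k ≠ 0 :=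
    ⟨(A i0).natDegree, i0, fun h => hi0 (Polynomial.leadingCoeff_eq_zero.mp h)⟩
  set e := Nat.find hex with he
  obtain ⟨i1, hi1⟩ : ∃ i, (A i).coeff e ≠ 0 := Nat.find_spec hex
  have hlow : ∀ k < e, ∀ i, (A i).coeff k = 0 := by
    intro k hk i
    by_contra h
    exact absurd ⟨i, h⟩ (Nat.find_min hex hk)
  set lam : ℕ → Fq := fun j => ∑ i : Fin s, (A i).coeff e * ((γ : Fq) ^ (i : ℕ)) ^ j with hlam
  set S : Finset ℕ := (Finset.range n).filter (fun j => lam j = 0) with hS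
  set V := (Polynomial.degreeLT Fq n ⊓
        LinearMap.ker (∑ i : Fin s,
          (LinearMap.mulLeft Fq (A i)).comp
            (Polynomial.aeval (Polynomial.C ((γ : Fq) ^ (i : ℕ)) * Polynomial.X)).toLinearMap))
  -- the coordinate map on S
  let Φ : V →ₗ[Fq] (↥S → Fq) :=
    { toFun := fun f j => (f : Fq[X]).coeff j
      map_add' := fun f g => by ext j; simp
      map_smul' := fun a f => by ext j; simp }
  have hinj : Function.Injective Φ := by
    intro f g hfg
    rw [← sub_eq_zero] at hfg ⊢
    set h := f - g with hh
    have hmem : (h : Fq[X]) ∈ V := h.2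
    obtain ⟨hdeg, hker⟩ := Submodule.mem_inf.mp hmem
    rw [Polynomial.mem_degreeLT] at hdeg
    rw [LinearMap.mem_ker] at hker
    have hTh : (∑ i : Fin s, A i * (aeval (C ((γ : Fq) ^ (i : ℕ)) * X) (h : Fq[X]))) = 0 := by
      simpa [LinearMap.sum_apply] using hker
    have hScoeff : ∀ j ∈ S, (h : Fq[X]).coeff j = 0 := by
      intro j hj
      have : Φ h = 0 := by
        simpa [Φ, hh, map_sub, sub_eq_zero] using hfg
      exact congrFun this ⟨j, hj⟩
    have hzero : ∀ j, (h : Fq[X]).coeff j = 0 := by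
      intro j
      induction j using Nat.strong_induction_on with
      | _ j ih =>
        by_cases hjn : n ≤ j
        · exact Polynomial.coeff_eq_zero_of_degree_lt
            (lt_of_lt_of_le hdeg (by exact_mod_cast hjn))
        · push_neg at hjn
          by_cases hlj : lam j = 0
          · exact hScoeff j (Finset.mem_filter.mpr ⟨Finset.mem_range.mpr hjn, hlj⟩)
          · have := key_step s A (fun i => (γ : Fq) ^ (i : ℕ)) (h : Fq[X]) e j hlow ih
              (by rw [hTh, Polynomial.coeff_zero])
            exact (mul_eq_zero.mp this).resolve_left hlj
    have : (h : Fq[X]) = 0 := Polynomial.ext fun j => by rw [hzero j, Polynomial.coeff_zero]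
    exact Subtype.ext this
  have hfin : Module.finrank Fq V ≤ S.card := by
    have := LinearMap.finrank_le_finrank_of_injective hinj
    simpa [Module.finrank_pi] using this
  refine hfin.trans ?_
  -- bound the number of bad indices using the polynomial Q
  set Q : Fq[X] := ∑ i : Fin s, C ((A i).coeff e) * X ^ (i : ℕ) with hQ
  have hQne : Q ≠ 0 := by
    intro h0
    have : Q.coeff (i1 : ℕ) = (A i1).coeff e := by
      rw [hQ, finset_sum_coeff]
      rw [Finset.sum_eq_single i1]
      · simp
      · intro i _ hne
        have : (i : ℕ) ≠ (i1 : ℕ) := fun h => hne (Fin.ext h)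
        rw [coeff_C_mul_X_pow, if_neg (Ne.symm this)]
      · simp
    rw [h0] at this
    exact hi1 (by simpa using this.symm)
  have hQdeg : Q.natDegree ≤ s - 1 := by
    refine Polynomial.natDegree_sum_le_of_forall_le _ _ fun i _ => ?_
    refine (Polynomial.natDegree_C_mul_le _ _).trans ?_
    rw [Polynomial.natDegree_X_pow]
    exact Nat.le_sub_one_of_lt i.2
  have heval : ∀ j : ℕ, Q.eval ((γ : Fq) ^ j) = lam j := by
    intro j
    rw [hQ, hlam, Polynomial.eval_finset_sum]
    refine Finset.sum_congr rfl fun i _ => ?_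
    rw [Polynomial.eval_mul, Polynomial.eval_C, Polynomial.eval_pow, Polynomial.eval_X,
      ← pow_mul, ← pow_mul, Nat.mul_comm]
  have horder : orderOf γ = n := by
    rw [orderOf_eq_card_of_forall_mem_zpowers hγ, Nat.card_eq_fintype_card, Fintype.card_units, hn]
  have hcard : S.card ≤ Q.roots.toFinset.card := by
    refine Finset.card_le_card_of_injOn (fun j => (γ : Fq) ^ j) ?_ ?_
    · intro j hj
      rw [Finset.mem_coe, Finset.mem_filter] at hj
      rw [Finset.mem_coe, Multiset.mem_toFinset, Polynomial.mem_roots hQne]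
      rw [Polynomial.IsRoot, heval j, hj.2]
    · intro j hj j' hj' hjj'
      rw [Finset.coe_filter] at hj hj'
      have hju : γ ^ j = γ ^ j' := Units.ext (by push_cast; exact hjj')
      have h1 : j ∈ Set.Iio (orderOf γ) := by
        rw [horder]; exact Finset.mem_range.mp hj.1
      have h2 : j' ∈ Set.Iio (orderOf γ) := by
        rw [horder]; exact Finset.mem_range.mp hj'.1
      exact pow_injOn_Iio_orderOf h1 h2 hju
  refine hcard.trans ?_
  calc Q.roots.toFinset.card ≤ Multiset.card Q.roots := Multiset.toFinset_card_le _
    _ ≤ Q.natDegree := Polynomial.card_roots' Q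
    _ ≤ s - 1 := hQdeg
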